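/- The set of type B_n bracket vectors with the componentwise order is a lattice, in which the meet of r and s is ↓(min(r,s)) and the join is ↑(max(r,s)), where min and max are componentwise, ↑ sends a vector satisfying (ii) to the least bracket vector above it, and ↓ sends a vector satisfying (i) to the greatest bracket vector below it. -/

import Mathlib

/-- Condition (i) for type `B_n` bracket vectors: for `i < j` (0-based),
if `r_j - (j-i)` is a nonnegative integer then `r_i ≤ r_j - (j-i)`
(equivalently `r_i + (j-i) ≤ r_j`; when `r_j = ∞` this holds trivially,
matching the convention that `∞` minus an integer is `∞`). -/
def condIB (n : ℕ) (r : Fin n → ℕ∞) : Prop :=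
  ∀ i j : Fin n, i < j → (((j : ℕ) - (i : ℕ) : ℕ) : ℕ∞) ≤ r j →
    r i + (((j : ℕ) - (i : ℕ) : ℕ) : ℕ∞) ≤ r j

/-- Condition (ii) for type `B_n` bracket vectors: if `∞ > r_i ≥ i`
(1-based; here `i = k+1` for the 0-based index `k`) then `r_{n+i-r_i} = ∞`. -/
def condIIB (n : ℕ) (r : Fin n → ℕ∞) : Prop :=
  ∀ (k : Fin n) (t : ℕ), r k = (t : ℕ∞) → ∀ _ht : (k : ℕ) + 1 ≤ t,
    r ⟨n + (k : ℕ) - t, by have := k.isLt; omega⟩ = ⊤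

/-- Entries lie in `{0, …, n-1} ∪ {∞}`. -/
def entriesB (n : ℕ) (r : Fin n → ℕ∞) : Prop :=
  ∀ k, r k = ⊤ ∨ r k ≤ ((n - 1 : ℕ) : ℕ∞)

/-- A type `B_n` bracket vector. -/
def isBVec (n : ℕ) (r : Fin n → ℕ∞) : Prop :=
  entriesB n r ∧ condIB n r ∧ condIIB n r

namespace TamariB

variable {n : ℕ}

/-- auxiliary index `n + k - t`, as a `Fin n` (junk value `k` when out of range). -/
def idxB (n : ℕ) (k : Fin n) (t : ℕ) : Fin n :=
  if h : (k:ℕ) < t ∧ t < n then ⟨n + k - t, by omega⟩ else k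

/-- `t` is an allowed value at position `k` below `f`. -/
def PB (f : Fin n → ℕ∞) (k : Fin n) (t : ℕ) : Prop :=
  (t : ℕ∞) ≤ f k ∧ (t ≤ (k:ℕ) ∨ f (idxB n k t) = ⊤)

instance (f : Fin n → ℕ∞) (k : Fin n) : DecidablePred (PB f k) := fun t => by
  unfold PB; infer_instance

/-- The greatest bracket vector below `f` (for `f` satisfying (i) and entries). -/
def downB (f : Fin n → ℕ∞) : Fin n → ℕ∞ :=
  fun k => if f k = ⊤ then ⊤ else ((Nat.findGreatest (PB f k) n : ℕ) : ℕ∞)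

lemma PB_zero (f : Fin n → ℕ∞) (k : Fin n) : PB f k 0 :=
  ⟨by simp, Or.inl (Nat.zero_le _)⟩

lemma PB_downB (f : Fin n → ℕ∞) (k : Fin n) : PB f k (Nat.findGreatest (PB f k) n) :=
  Nat.findGreatest_spec (Nat.zero_le n) (PB_zero f k)

lemma downB_le (f : Fin n → ℕ∞) : downB f ≤ f := by
  intro k
  unfold downB
  split
  · next h => exact h ▸ le_refl _
  · exact (PB_downB f k).1

lemma downB_top (f : Fin n → ℕ∞) {k : Fin n} (h : f k = ⊤) : downB f k = ⊤ := by
  simp [downB, h]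

lemma downB_eq_coe (f : Fin n → ℕ∞) {k : Fin n} (h : f k ≠ ⊤) :
    downB f k = ((Nat.findGreatest (PB f k) n : ℕ) : ℕ∞) := by
  simp [downB, h]

lemma le_downB {f h : Fin n → ℕ∞} (hfE : entriesB n f) (hh : condIIB n h)
    (hle : h ≤ f) : h ≤ downB f := by
  intro k
  by_cases hfk : f k = ⊤
  · rw [downB_top f hfk]; exact le_top
  rw [downB_eq_coe f hfk]
  rcases eq_or_ne (h k) ⊤ with htop | hne
  · exact absurd (top_le_iff.mp (htop ▸ hle k)) hfk
  obtain ⟨t, ht0⟩ := WithTop.ne_top_iff_exists.mp hne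
  have ht : h k = (t : ℕ∞) := by exact_mod_cast ht0.symm
  rw [ht, Nat.cast_le]
  have hfk' : f k ≤ ((n - 1 : ℕ) : ℕ∞) := (hfE k).resolve_left hfk
  have htf : (t : ℕ∞) ≤ f k := ht ▸ hle k
  have htn : t ≤ n - 1 := Nat.cast_le.mp (le_trans htf hfk')
  have hn1 : 1 ≤ n := k.pos
  refine Nat.le_findGreatest (by omega) ⟨htf, ?_⟩
  by_cases hk : t ≤ (k:ℕ)
  · exact Or.inl hk
  · push_neg at hk
    have hii := hh k t ht hk
    have hidx : idxB n k t = ⟨n + (k:ℕ) - t, by have := k.isLt; omega⟩ := by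
      unfold idxB
      rw [dif_pos ⟨hk, by omega⟩]
    right
    rw [hidx]
    exact top_le_iff.mp (hii ▸ hle _)

lemma downB_isBVec {f : Fin n → ℕ∞} (hfE : entriesB n f) (hfI : condIB n f) :
    isBVec n (downB f) := by
  have hval : ∀ k : Fin n, f k ≠ ⊤ → Nat.findGreatest (PB f k) n ≤ n - 1 := by
    intro k hk
    exact Nat.cast_le.mp (le_trans (PB_downB f k).1 ((hfE k).resolve_left hk))
  refine ⟨?_, ?_, ?_⟩
  · -- entriesB
    intro k
    by_cases hk : f k = ⊤
    · exact Or.inl (downB_top f hk)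
    · right; rw [downB_eq_coe f hk]; exact Nat.cast_le.mpr (hval k hk)
  · -- condIB
    intro i j hij hle
    set d : ℕ := (j:ℕ) - (i:ℕ) with hd
    by_cases hfj : f j = ⊤
    · rw [downB_top f hfj]; exact le_top
    rw [downB_eq_coe f hfj] at hle ⊢
    set tj := Nat.findGreatest (PB f j) n with htj
    have hdtj : d ≤ tj := Nat.cast_le.mp hle
    have hdfj : (d : ℕ∞) ≤ f j := le_trans hle (PB_downB f j).1
    by_cases hfi : f i = ⊤
    · exfalso
      have := hfI i j hij hdfj
      rw [hfi, top_add] at this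
      exact hfj (top_le_iff.mp this)
    rw [downB_eq_coe f hfi]
    set u := Nat.findGreatest (PB f i) n with hu
    have hPu := PB_downB f i
    rw [← Nat.cast_add, Nat.cast_le]
    have hn1 : 1 ≤ n := i.pos
    have hij' : (i:ℕ) < (j:ℕ) := hij
    have hjn : (j:ℕ) < n := j.isLt
    -- show PB f j (u + d)
    have hufi : (u : ℕ∞) ≤ f i := hPu.1
    have hudfj : ((u + d : ℕ) : ℕ∞) ≤ f j := by
      have h1 := hfI i j hij hdfj
      calc ((u + d : ℕ) : ℕ∞) = (u : ℕ∞) + (d : ℕ∞) := by push_cast; ring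
        _ ≤ f i + (d : ℕ∞) := add_le_add hufi le_rfl
        _ ≤ f j := h1
    have hudn : u + d ≤ n - 1 := by
      have := Nat.cast_le.mp (le_trans hudfj ((hfE j).resolve_left hfj))
      exact this
    refine Nat.le_findGreatest (by omega) ⟨hudfj, ?_⟩
    rcases hPu.2 with hui | hidx
    · exact Or.inl (by omega)
    · right
      have hui : (i:ℕ) < u := by
        by_contra hc
        push_neg at hc
        -- then idxB n i u = i, so f i = ⊤, contradiction
        have : idxB n i u = i := by unfold idxB; rw [dif_neg]; omega
        rw [this] at hidx; exact hfi hidx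
      have hun : u < n := by
        have := Nat.cast_le.mp (le_trans hufi ((hfE i).resolve_left hfi))
        omega
      have h1 : idxB n i u = ⟨n + (i:ℕ) - u, by omega⟩ := by
        unfold idxB; rw [dif_pos ⟨hui, hun⟩]
      have h2 : idxB n j (u + d) = ⟨n + (j:ℕ) - (u + d), by omega⟩ := by
        unfold idxB; rw [dif_pos ⟨by omega, by omega⟩]
      have heq : (⟨n + (j:ℕ) - (u + d), by omega⟩ : Fin n) = ⟨n + (i:ℕ) - u, by omega⟩ := by
        apply Fin.ext; simp only [Fin.mk.injEq] at *; omega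
      rw [h2, heq]
      rw [h1] at hidx
      exact hidx
  · -- condIIB
    intro k t hkt ht
    by_cases hk : f k = ⊤
    · rw [downB_top f hk] at hkt; exact absurd hkt.symm (WithTop.coe_ne_top)
    rw [downB_eq_coe f hk] at hkt
    have htv : t = Nat.findGreatest (PB f k) n := by exact_mod_cast hkt.symm
    have hP := PB_downB f k
    rw [← htv] at hP
    rcases hP.2 with h1 | h2
    · omega
    · have htn : t ≤ n - 1 := by
        have := hval k hk; omega
      have hkn : (k:ℕ) < n := k.isLt
      have hidx : idxB n k t = ⟨n + (k:ℕ) - t, by omega⟩ := by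
        unfold idxB; rw [dif_pos ⟨by omega, by omega⟩]
      rw [hidx] at h2
      exact downB_top f h2

end TamariB

namespace TamariB2
open TamariB

variable {n : ℕ}

lemma min_entriesB {a b : Fin n → ℕ∞} (ha : entriesB n a) (hb : entriesB n b) :
    entriesB n (fun k => min (a k) (b k)) := by
  intro k
  rcases ha k with h1 | h1
  · rcases hb k with h2 | h2
    · exact Or.inl (by simp [h1, h2])
    · exact Or.inr (le_trans (min_le_right _ _) h2)
  · exact Or.inr (le_trans (min_le_left _ _) h1)

lemma min_condIB {a b : Fin n → ℕ∞} (ha : condIB n a) (hb : condIB n b) :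
    condIB n (fun k => min (a k) (b k)) := by
  intro i j hij hle
  simp only at hle ⊢
  have h1 := ha i j hij (le_trans hle (min_le_left _ _))
  have h2 := hb i j hij (le_trans hle (min_le_right _ _))
  exact le_min (le_trans (add_le_add (min_le_left _ _) le_rfl) h1)
    (le_trans (add_le_add (min_le_right _ _) le_rfl) h2)

/-- Binary meet of bracket vectors. -/
noncomputable def meetB (a b : Fin n → ℕ∞) : Fin n → ℕ∞ :=
  downB (fun k => min (a k) (b k))

lemma meetB_isBVec {a b : Fin n → ℕ∞} (ha : isBVec n a) (hb : isBVec n b) :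
    isBVec n (meetB a b) :=
  downB_isBVec (min_entriesB ha.1 hb.1) (min_condIB ha.2.1 hb.2.1)

lemma meetB_le_left {a b : Fin n → ℕ∞} : meetB a b ≤ a :=
  fun k => le_trans (downB_le _ k) (min_le_left _ _)

lemma meetB_le_right {a b : Fin n → ℕ∞} : meetB a b ≤ b :=
  fun k => le_trans (downB_le _ k) (min_le_right _ _)

lemma le_meetB {a b h : Fin n → ℕ∞} (ha : isBVec n a) (hb : isBVec n b)
    (hh : condIIB n h) (h1 : h ≤ a) (h2 : h ≤ b) : h ≤ meetB a b :=
  le_downB (min_entriesB ha.1 hb.1) hh (fun k => le_min (h1 k) (h2 k))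

lemma top_isBVec : isBVec n (fun _ => (⊤ : ℕ∞)) := by
  refine ⟨fun k => Or.inl rfl, fun i j hij hle => le_top, fun k t hkt ht => ?_⟩
  exact absurd hkt WithTop.top_ne_coe

lemma foldr_meet_spec {r s : Fin n → ℕ∞} (hr : isBVec n r) (hs : isBVec n s)
    (L : List (Fin n → ℕ∞))
    (hL : ∀ x ∈ L, isBVec n x ∧ r ≤ x ∧ s ≤ x) :
    isBVec n (L.foldr meetB (fun _ => ⊤)) ∧ r ≤ (L.foldr meetB (fun _ => ⊤)) ∧
      s ≤ (L.foldr meetB (fun _ => ⊤)) ∧ ∀ x ∈ L, (L.foldr meetB (fun _ => ⊤)) ≤ x := by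
  induction L with
  | nil => exact ⟨top_isBVec, fun k => le_top, fun k => le_top, by simp⟩
  | cons a L ih =>
    obtain ⟨hB, hrle, hsle, hall⟩ := ih (fun x hx => hL x (List.mem_cons_of_mem a hx))
    obtain ⟨haB, hra, hsa⟩ := hL a List.mem_cons_self
    simp only [List.foldr_cons]
    refine ⟨meetB_isBVec haB hB, le_meetB haB hB hr.2.2 hra hrle,
      le_meetB haB hB hs.2.2 hsa hsle, ?_⟩
    intro x hx
    rcases List.mem_cons.mp hx with rfl | hx
    · exact meetB_le_left
    · exact le_trans meetB_le_right (hall x hx)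

/-- All candidate vectors with entries in `{0,…,n-1,⊤}`. -/
def allVecs (n : ℕ) : Finset (Fin n → ℕ∞) :=
  Finset.image (fun (v : Fin n → Fin (n+1)) (k : Fin n) =>
    if (v k : ℕ) < n then (((v k : ℕ) : ℕ) : ℕ∞) else ⊤) Finset.univ

lemma mem_allVecs {h : Fin n → ℕ∞} (hE : entriesB n h) : h ∈ allVecs n := by
  have key : ∀ k : Fin n, ∀ hk : h k ≠ ⊤, ((h k).untop hk : ℕ) < n := by
    intro k hk
    have h1 := (hE k).resolve_left hk
    have h2 : (((h k).untop hk : ℕ) : ℕ∞) = h k := WithTop.coe_untop _ _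
    have h4 : ((h k).untop hk : ℕ) ≤ n - 1 := by
      rw [← Nat.cast_le (α := ℕ∞), h2]; exact h1
    have := k.pos
    omega
  rw [allVecs, Finset.mem_image]
  refine ⟨fun k => if hk : h k = ⊤ then ⟨n, Nat.lt_succ_self n⟩
    else ⟨(h k).untop hk, Nat.lt_succ_of_lt (key k hk)⟩, Finset.mem_univ _, ?_⟩
  funext k
  by_cases hk : h k = ⊤
  · simp [hk]
  · simp only [dif_neg hk]
    rw [if_pos (key k hk)]
    exact WithTop.coe_untop _ _

end TamariB2


open TamariB TamariB2 in
/-- The type `B_n` bracket vectors, ordered componentwise, form a lattice: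
for bracket vectors `r, s` there is a greatest bracket vector below the
componentwise minimum (namely `↓(min(r,s))`), which is then the meet, and a
least bracket vector above the componentwise maximum (namely `↑(max(r,s))`),
which is then the join. -/
theorem tamariB_lattice (n : ℕ) (r s : Fin n → ℕ∞)
    (hr : isBVec n r) (hs : isBVec n s) :
    (∃ m : Fin n → ℕ∞, isBVec n m ∧
      ∀ h : Fin n → ℕ∞, isBVec n h →
        ((h ≤ fun k => min (r k) (s k)) ↔ h ≤ m)) ∧
    (∃ j : Fin n → ℕ∞, isBVec n j ∧
      ∀ h : Fin n → ℕ∞, isBVec n h →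
        (((fun k => max (r k) (s k)) ≤ h) ↔ j ≤ h)) := by
  classical
  constructor
  · refine ⟨meetB r s, meetB_isBVec hr hs, ?_⟩
    intro h hh
    constructor
    · intro hle
      exact le_downB (min_entriesB hr.1 hs.1) hh.2.2 hle
    · intro hle
      exact le_trans hle (downB_le _)
  · set L := ((allVecs n).filter (fun x => isBVec n x ∧ r ≤ x ∧ s ≤ x)).toList with hLdef
    have hL : ∀ x ∈ L, isBVec n x ∧ r ≤ x ∧ s ≤ x := by
      intro x hx
      exact (Finset.mem_filter.mp (Finset.mem_toList.mp hx)).2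
    obtain ⟨hB, hrle, hsle, hall⟩ := foldr_meet_spec hr hs L hL
    refine ⟨_, hB, ?_⟩
    intro h hh
    constructor
    · intro hle
      apply hall
      rw [hLdef, Finset.mem_toList, Finset.mem_filter]
      exact ⟨mem_allVecs hh.1, hh,
        fun k => le_trans (le_max_left _ _) (hle k),
        fun k => le_trans (le_max_right _ _) (hle k)⟩
    · intro hle k
      exact max_le (le_trans (hrle k) (hle k)) (le_trans (hsle k) (hle k))
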